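/- Fix κ > 0, ε > 0 and ū < −1. Then E[∅] = (1+ū)²/(2κ²), and every ℤ²-periodic measurable set A ⊆ ℝ² with |A ∩ Q| > 0 satisfies E[A] > (1+ū)²/(2κ²). In other words, the trivial state u ≡ −1 is the unique global minimizer of the sharp-interface energy when ū < −1. -/

import Mathlib

open MeasureTheory Real ENNReal NNReal

noncomputable section

/-- The unit cell `Q = [0,1)^d` in `ℝ^d`. -/
def Qcell (d : ℕ) : Set (EuclideanSpace ℝ (Fin d)) :=
  WithLp.ofLp ⁻¹' (Set.univ.pi fun _ => Set.Ico (0 : ℝ) 1)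

/-- The integer vector `n` viewed as a point of `ℝ^d`. -/
def zvec (d : ℕ) (n : Fin d → ℤ) : EuclideanSpace ℝ (Fin d) :=
  WithLp.toLp 2 fun i => (n i : ℝ)

/-- A set `A ⊆ ℝ^d` is `ℤ^d`-periodic if `A + n = A` for every `n ∈ ℤ^d`. -/
def IsPeriodicSet (d : ℕ) (A : Set (EuclideanSpace ℝ (Fin d))) : Prop :=
  ∀ (n : Fin d → ℤ) (x : EuclideanSpace ℝ (Fin d)), x + zvec d n ∈ A ↔ x ∈ A

/-- Fourier coefficient over the unit cell: `f̂_q = ∫_Q f(x) e^{-2πi q·x} dx`. -/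
def fCoeff (d : ℕ) (f : EuclideanSpace ℝ (Fin d) → ℝ) (q : Fin d → ℤ) : ℂ :=
  ∫ x in Qcell d,
    (f x : ℂ) * Complex.exp (-(2 * Real.pi * Complex.I) * (∑ i, (q i : ℝ) * x i : ℝ))

/-- The function `2·1_A - 1 - ū`. -/
def uSet (d : ℕ) (ub : ℝ) (A : Set (EuclideanSpace ℝ (Fin d))) :
    EuclideanSpace ℝ (Fin d) → ℝ :=
  fun x => A.indicator (fun _ => (2 : ℝ)) x - 1 - ub

/-- The screened Coulomb (nonlocal) part of the sharp interface energy, in Fourier form: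
`(1/2)·∑_{q ∈ ℤ^d} |â_q|²/(κ² + 4π²|q|²)` where `â_q` is the Fourier coefficient
of `2·1_A − 1 − ū`. -/
def nonlocalSharp (d : ℕ) (κ ub : ℝ) (A : Set (EuclideanSpace ℝ (Fin d))) : ℝ :=
  (1 / 2) * ∑' q : Fin d → ℤ,
    (‖fCoeff d (uSet d ub A) q‖) ^ 2
      / (κ ^ 2 + 4 * Real.pi ^ 2 * ∑ i, ((q i : ℝ)) ^ 2)

/-- The sharp interface energy
`E[A] = ε·H^{d-1}(∂A ∩ Q) + (1/2)·∑_{q ∈ ℤ^d} |â_q|²/(κ² + 4π²|q|²)`,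
valued in `ℝ≥0∞` since the perimeter term may be infinite. -/
def sharpEnergy (d : ℕ) (κ ε ub : ℝ) (A : Set (EuclideanSpace ℝ (Fin d))) : ℝ≥0∞ :=
  ENNReal.ofReal ε * μH[(d : ℝ) - 1] (frontier A ∩ Qcell d)
    + ENNReal.ofReal (nonlocalSharp d κ ub A)


/-- The background charge `ū(ε) = −1 + ε^{2/3}·|ln ε|^{1/3}·δ̄`. -/
def ubar (δ ε : ℝ) : ℝ :=
  -1 + ε ^ ((2 : ℝ) / 3) * |Real.log ε| ^ ((1 : ℝ) / 3) * δ


namespace St2Aux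

variable (d : ℕ)

lemma vol_Qcell : volume (Qcell d) = 1 := by
  have h := (EuclideanSpace.volume_preserving_symm_measurableEquiv_toLp (Fin d)).measure_preimage
    (s := Set.univ.pi fun _ : Fin d => Set.Ico (0:ℝ) 1)
    (MeasurableSet.univ_pi fun _ => measurableSet_Ico).nullMeasurableSet
  have h2 : (MeasurableEquiv.toLp 2 (Fin d → ℝ)).symm ⁻¹'
      (Set.univ.pi fun _ : Fin d => Set.Ico (0:ℝ) 1) = Qcell d := rfl
  rw [h2] at h
  rw [h, volume_pi_pi]
  simp [Real.volume_Ico]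

/-- The restricted measure on the unit cell. -/
def μQ : Measure (EuclideanSpace ℝ (Fin d)) := volume.restrict (Qcell d)

instance : IsProbabilityMeasure (μQ d) :=
  ⟨by rw [μQ, Measure.restrict_apply_univ, vol_Qcell]⟩

/-- The character `x ↦ e^{2πi q·x}`. -/
def ch (q : Fin d → ℤ) (x : EuclideanSpace ℝ (Fin d)) : ℂ :=
  Complex.exp ((2 * Real.pi * Complex.I) * ((∑ i, (q i : ℝ) * x i : ℝ) : ℂ))

lemma ch_continuous (q : Fin d → ℤ) : Continuous (ch d q) := by
  apply Complex.continuous_exp.comp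
  refine continuous_const.mul (Complex.continuous_ofReal.comp ?_)
  exact continuous_finset_sum _ fun i _ =>
    continuous_const.mul (EuclideanSpace.proj i).continuous

lemma norm_ch (q : Fin d → ℤ) (x : EuclideanSpace ℝ (Fin d)) : ‖ch d q x‖ = 1 := by
  have h : (2 * (Real.pi : ℂ) * Complex.I) * ((∑ i, (q i : ℝ) * x i : ℝ) : ℂ)
      = ((2 * Real.pi * ∑ i, (q i : ℝ) * x i : ℝ) : ℂ) * Complex.I := by
    push_cast; ring
  rw [ch, h, Complex.norm_exp_ofReal_mul_I]

lemma conj_ch (q : Fin d → ℤ) (x : EuclideanSpace ℝ (Fin d)) :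
    (starRingEnd ℂ) (ch d q x)
      = Complex.exp (-(2 * Real.pi * Complex.I) * ((∑ i, (q i : ℝ) * x i : ℝ) : ℂ)) := by
  rw [ch, ← Complex.exp_conj]
  congr 1
  simp only [map_mul, Complex.conj_I, Complex.conj_ofReal, map_ofNat]
  ring

lemma conj_ch_mul (q q' : Fin d → ℤ) (x : EuclideanSpace ℝ (Fin d)) :
    (starRingEnd ℂ) (ch d q x) * ch d q' x = ch d (q' - q) x := by
  rw [conj_ch, ch, ch, ← Complex.exp_add]
  congr 1
  push_cast [Pi.sub_apply]
  simp only [sub_mul, Finset.sum_sub_distrib]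
  ring

lemma prod_ite_eq_ite (n : Fin d → ℤ) :
    (∏ i, if n i = 0 then (1:ℂ) else 0) = if n = 0 then 1 else 0 := by
  rcases eq_or_ne n 0 with h | h
  · subst h; simp
  · rw [if_neg h]
    obtain ⟨i, hi⟩ : ∃ i, n i ≠ 0 := by
      by_contra hc
      push_neg at hc
      exact h (funext hc)
    exact Finset.prod_eq_zero (Finset.mem_univ i) (if_neg hi)

lemma integral_exp_Ico (n : ℤ) :
    (∫ t in Set.Ico (0:ℝ) 1, Complex.exp ((2 * Real.pi * Complex.I * n) * t))
      = if n = 0 then 1 else 0 := by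
  rcases eq_or_ne n 0 with h | h
  · subst h
    simp [Real.volume_Ico]
  · rw [if_neg h, MeasureTheory.integral_Ico_eq_integral_Ioo,
      ← MeasureTheory.integral_Ioc_eq_integral_Ioo,
      ← intervalIntegral.integral_of_le zero_le_one]
    rw [integral_exp_mul_complex (by
      refine mul_ne_zero (mul_ne_zero (mul_ne_zero two_ne_zero ?_) Complex.I_ne_zero) ?_
      · exact Complex.ofReal_ne_zero.mpr Real.pi_ne_zero
      · exact_mod_cast h)]
    have h1 : (2 * (Real.pi:ℂ) * Complex.I * n) * ((1:ℝ):ℂ)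
        = (n:ℂ) * (2 * Real.pi * Complex.I) := by push_cast; ring
    rw [h1, Complex.exp_int_mul_two_pi_mul_I]
    simp

lemma integral_ch (n : Fin d → ℤ) :
    (∫ x, ch d n x ∂(μQ d)) = if n = 0 then 1 else 0 := by
  have hre : ∀ x : EuclideanSpace ℝ (Fin d),
      ch d n x = ∏ i, Complex.exp ((2 * Real.pi * Complex.I * n i) * ((x i : ℝ):ℂ)) := by
    intro x
    rw [ch, ← Complex.exp_sum]
    congr 1
    push_cast
    rw [Finset.mul_sum]
    exact Finset.sum_congr rfl fun i _ => by ring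
  have h2 : Qcell d = (MeasurableEquiv.toLp 2 (Fin d → ℝ)).symm ⁻¹'
      (Set.univ.pi fun _ : Fin d => Set.Ico (0:ℝ) 1) := rfl
  have key : ∀ x : EuclideanSpace ℝ (Fin d), ch d n x
      = (fun y : Fin d → ℝ => ∏ i, Complex.exp ((2 * Real.pi * Complex.I * n i) * ((y i : ℝ):ℂ)))
          ((MeasurableEquiv.toLp 2 (Fin d → ℝ)).symm x) := fun x => hre x
  have step1 : (∫ x, ch d n x ∂(μQ d))
      = ∫ y in Set.univ.pi fun _ : Fin d => Set.Ico (0:ℝ) 1,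
          ∏ i, Complex.exp ((2 * Real.pi * Complex.I * n i) * ((y i : ℝ):ℂ)) := by
    rw [μQ, integral_congr_ae (Filter.Eventually.of_forall key), h2]
    exact (EuclideanSpace.volume_preserving_symm_measurableEquiv_toLp (Fin d)).setIntegral_preimage_emb
      (MeasurableEquiv.toLp 2 (Fin d → ℝ)).symm.measurableEmbedding
      (fun y => ∏ i, Complex.exp ((2 * Real.pi * Complex.I * n i) * ((y i : ℝ):ℂ))) _
  rw [step1]
  rw [← MeasureTheory.integral_indicator (MeasurableSet.univ_pi fun _ => measurableSet_Ico)]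
  have h3 : ∀ y : Fin d → ℝ,
      (Set.univ.pi fun _ : Fin d => Set.Ico (0:ℝ) 1).indicator
        (fun y => ∏ i, Complex.exp ((2 * Real.pi * Complex.I * n i) * ((y i : ℝ):ℂ))) y
      = ∏ i, (Set.Ico (0:ℝ) 1).indicator
          (fun t => Complex.exp ((2 * Real.pi * Complex.I * n i) * ((t : ℝ):ℂ))) (y i) := by
    intro y
    by_cases hy : y ∈ Set.univ.pi fun _ : Fin d => Set.Ico (0:ℝ) 1
    · rw [Set.indicator_of_mem hy]
      exact Finset.prod_congr rfl fun i _ =>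
        (Set.indicator_of_mem (hy i (Set.mem_univ i))
          (fun t : ℝ => Complex.exp ((2 * Real.pi * Complex.I * n i) * ((t : ℝ):ℂ)))).symm
    · rw [Set.indicator_of_notMem hy]
      obtain ⟨i, -, hi⟩ : ∃ i, i ∈ Set.univ ∧ y i ∉ Set.Ico (0:ℝ) 1 := by
        simpa [Set.mem_pi, not_forall] using hy
      exact (Finset.prod_eq_zero (Finset.mem_univ i)
        (Set.indicator_of_notMem hi _)).symm
  rw [integral_congr_ae (Filter.Eventually.of_forall h3)]
  rw [MeasureTheory.integral_fintype_prod_volume_eq_prod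
    (f := fun i t => (Set.Ico (0:ℝ) 1).indicator
      (fun t => Complex.exp ((2 * Real.pi * Complex.I * n i) * ((t : ℝ):ℂ))) t)]
  have h4 : ∀ i : Fin d,
      (∫ t : ℝ, (Set.Ico (0:ℝ) 1).indicator
        (fun t => Complex.exp ((2 * Real.pi * Complex.I * n i) * ((t : ℝ):ℂ))) t)
      = if n i = 0 then 1 else 0 := by
    intro i
    rw [MeasureTheory.integral_indicator measurableSet_Ico]
    exact integral_exp_Ico (n i)
  rw [Finset.prod_congr rfl fun i _ => h4 i]
  exact prod_ite_eq_ite d n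

lemma memL2_ch (q : Fin d → ℤ) : MemLp (ch d q) 2 (μQ d) := by
  refine MemLp.of_bound ((ch_continuous d q).aestronglyMeasurable) 1 ?_
  exact Filter.Eventually.of_forall fun x => le_of_eq (norm_ch d q x)

/-- The characters as elements of `L²`. -/
def chL (q : Fin d → ℤ) : Lp ℂ 2 (μQ d) := (memL2_ch d q).toLp _

lemma inner_chL (q q' : Fin d → ℤ) :
    (inner ℂ (chL d q) (chL d q') : ℂ) = if q = q' then 1 else 0 := by
  rw [MeasureTheory.L2.inner_def]
  have h1 : ∀ᵐ x ∂(μQ d), (inner ℂ ((chL d q : Lp ℂ 2 (μQ d)) x) ((chL d q' : Lp ℂ 2 (μQ d)) x) : ℂ)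
      = ch d (q' - q) x := by
    filter_upwards [(memL2_ch d q).coeFn_toLp, (memL2_ch d q').coeFn_toLp] with x h h'
    rw [show ((chL d q : Lp ℂ 2 (μQ d)) : _ → ℂ) x = ch d q x from h,
      show ((chL d q' : Lp ℂ 2 (μQ d)) : _ → ℂ) x = ch d q' x from h']
    rw [RCLike.inner_apply']
    exact conj_ch_mul d q q' x
  rw [integral_congr_ae h1, integral_ch]
  have : q' - q = 0 ↔ q = q' := by
    constructor
    · intro h; exact (sub_eq_zero.mp h).symm
    · intro h; rw [h, sub_self]
  simp only [this]

lemma orthonormal_chL : Orthonormal ℂ (chL d) := by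
  rw [orthonormal_iff_ite]
  intro q q'
  rw [inner_chL]

variable {d}
variable (ub : ℝ) (A : Set (EuclideanSpace ℝ (Fin d)))

lemma memL2_uSet (hA : MeasurableSet A) : MemLp (fun x => ((uSet d ub A x : ℝ) : ℂ)) 2 (μQ d) := by
  refine MemLp.of_bound ?_ (3 + |ub|) ?_
  · refine (Measurable.aestronglyMeasurable ?_)
    exact Complex.measurable_ofReal.comp
      (((measurable_const.indicator hA).sub measurable_const).sub measurable_const)
  · refine Filter.Eventually.of_forall fun x => ?_
    rw [Complex.norm_real, Real.norm_eq_abs, uSet]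
    classical
    rw [Set.indicator_apply]
    split_ifs <;>
    · rw [abs_le]
      constructor <;> nlinarith [le_abs_self ub, neg_abs_le ub]

/-- `2·1_A − 1 − ū` as an element of `L²`. -/
def uL (hA : MeasurableSet A) : Lp ℂ 2 (μQ d) := (memL2_uSet ub A hA).toLp _

lemma fCoeff_eq_inner (hA : MeasurableSet A) (q : Fin d → ℤ) :
    fCoeff d (uSet d ub A) q = inner ℂ (chL d q) (uL ub A hA) := by
  rw [MeasureTheory.L2.inner_def]
  have h1 : ∀ᵐ x ∂(μQ d),
      (inner ℂ ((chL d q : Lp ℂ 2 (μQ d)) x) ((uL ub A hA : Lp ℂ 2 (μQ d)) x) : ℂ)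
      = (uSet d ub A x : ℂ) *
          Complex.exp (-(2 * Real.pi * Complex.I) * ((∑ i, (q i : ℝ) * x i : ℝ) : ℂ)) := by
    filter_upwards [(memL2_ch d q).coeFn_toLp, (memL2_uSet ub A hA).coeFn_toLp] with x h h'
    rw [show ((chL d q : Lp ℂ 2 (μQ d)) : _ → ℂ) x = ch d q x from h,
      show ((uL ub A hA : Lp ℂ 2 (μQ d)) : _ → ℂ) x = (uSet d ub A x : ℂ) from h']
    rw [RCLike.inner_apply', conj_ch]
    ring
  rw [integral_congr_ae h1]
  rfl

lemma summable_fCoeff (hA : MeasurableSet A) :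
    Summable fun q : Fin d → ℤ => (‖fCoeff d (uSet d ub A) q‖) ^ 2 := by
  have h := (orthonormal_chL d).inner_products_summable (x := uL ub A hA)
  refine h.congr fun q => ?_
  rw [fCoeff_eq_inner ub A hA]


lemma volume_inter_lt_top : volume (A ∩ Qcell d) < ⊤ :=
  lt_of_le_of_lt (measure_mono Set.inter_subset_right)
    (by rw [vol_Qcell]; exact ENNReal.one_lt_top)

lemma integral_uSet (hA : MeasurableSet A) :
    (∫ x, uSet d ub A x ∂(μQ d)) = 2 * (volume (A ∩ Qcell d)).toReal - 1 - ub := by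
  have h1 : Integrable (A.indicator fun _ => (2:ℝ)) (μQ d) :=
    (integrable_const (2:ℝ)).indicator hA
  have h2 : uSet d ub A = fun x => A.indicator (fun _ => (2:ℝ)) x - (1 + ub) := by
    funext x; rw [uSet]; ring
  rw [h2, integral_sub h1 (integrable_const _), integral_indicator_const (2:ℝ) hA,
    integral_const]
  have h3 : (μQ d).real A = (volume (A ∩ Qcell d)).toReal := by
    rw [Measure.real, μQ, Measure.restrict_apply hA]
  have h4 : (μQ d).real Set.univ = 1 := by simp [Measure.real]
  rw [h3, h4]
  simp only [smul_eq_mul, one_mul]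
  ring

lemma fCoeff_zero (hA : MeasurableSet A) :
    fCoeff d (uSet d ub A) 0
      = ((2 * (volume (A ∩ Qcell d)).toReal - 1 - ub : ℝ) : ℂ) := by
  have h1 : ∀ x : EuclideanSpace ℝ (Fin d),
      ((uSet d ub A x : ℝ) : ℂ) *
        Complex.exp (-(2 * Real.pi * Complex.I) *
          ((∑ i, (((0 : Fin d → ℤ) i : ℝ)) * x i : ℝ) : ℂ))
      = ((uSet d ub A x : ℝ) : ℂ) := by
    intro x
    simp
  rw [fCoeff, integral_congr_ae (Filter.Eventually.of_forall h1), ← μQ,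
    ← integral_uSet ub A hA]
  exact integral_ofReal

lemma fCoeff_empty (q : Fin d → ℤ) :
    fCoeff d (uSet d ub (∅ : Set (EuclideanSpace ℝ (Fin d)))) q
      = if q = 0 then ((-1 - ub : ℝ) : ℂ) else 0 := by
  have h1 : ∀ x : EuclideanSpace ℝ (Fin d),
      ((uSet d ub ∅ x : ℝ) : ℂ) *
        Complex.exp (-(2 * Real.pi * Complex.I) * ((∑ i, ((q i : ℝ)) * x i : ℝ) : ℂ))
      = ((-1 - ub : ℝ) : ℂ) * ch d (-q) x := by
    intro x
    have h2 : uSet d ub (∅ : Set (EuclideanSpace ℝ (Fin d))) x = -1 - ub := by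
      rw [uSet, Set.indicator_empty]; ring
    rw [h2, ch]
    congr 2
    push_cast [Pi.neg_apply]
    simp only [neg_mul, Finset.sum_neg_distrib]
    ring
  rw [fCoeff, integral_congr_ae (Filter.Eventually.of_forall h1), ← μQ,
    integral_const_mul, integral_ch]
  have h3 : -q = 0 ↔ q = 0 := neg_eq_zero
  simp only [h3]
  split_ifs <;> simp

end St2Aux
section Final

open St2Aux

variable {d : ℕ}

lemma nonlocal_empty (κ ub : ℝ) (hκ : 0 < κ) :
    nonlocalSharp d κ ub (∅ : Set (EuclideanSpace ℝ (Fin d)))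
      = (1 + ub) ^ 2 / (2 * κ ^ 2) := by
  rw [nonlocalSharp]
  rw [tsum_eq_single (0 : Fin d → ℤ) (by
    intro q hq
    rw [fCoeff_empty, if_neg hq]
    simp)]
  rw [fCoeff_empty, if_pos rfl, Complex.norm_real, Real.norm_eq_abs, _root_.sq_abs]
  have h0 : (∑ i : Fin d, (((0 : Fin d → ℤ) i : ℝ)) ^ 2) = 0 := by simp
  rw [h0]
  have hκ2 : κ ^ 2 ≠ 0 := pow_ne_zero 2 hκ.ne'
  field_simp
  ring

lemma nonlocal_gt (κ ub : ℝ) (hκ : 0 < κ) (hub : ub < -1)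
    (A : Set (EuclideanSpace ℝ (Fin d))) (hA : MeasurableSet A)
    (hm : 0 < volume (A ∩ Qcell d)) :
    (1 + ub) ^ 2 / (2 * κ ^ 2) < nonlocalSharp d κ ub A := by
  set f : (Fin d → ℤ) → ℝ := fun q =>
    (‖fCoeff d (uSet d ub A) q‖) ^ 2
      / (κ ^ 2 + 4 * Real.pi ^ 2 * ∑ i, ((q i : ℝ)) ^ 2) with hf
  have hκ2 : (0:ℝ) < κ ^ 2 := by positivity
  have hDpos : ∀ q : Fin d → ℤ, (0:ℝ) < κ ^ 2 + 4 * Real.pi ^ 2 * ∑ i, ((q i : ℝ)) ^ 2 := by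
    intro q
    have : (0:ℝ) ≤ 4 * Real.pi ^ 2 * ∑ i, ((q i : ℝ)) ^ 2 := by positivity
    linarith
  have hfnn : ∀ q, 0 ≤ f q := fun q => div_nonneg (sq_nonneg _) (hDpos q).le
  have hsum : Summable f := by
    refine Summable.of_nonneg_of_le hfnn (fun q => ?_)
      (((summable_fCoeff ub A hA)).div_const (κ ^ 2))
    refine div_le_div_of_nonneg_left (sq_nonneg _) hκ2 ?_
    have : (0:ℝ) ≤ 4 * Real.pi ^ 2 * ∑ i, ((q i : ℝ)) ^ 2 := by positivity
    linarith
  have hle : f 0 ≤ ∑' q, f q := Summable.le_tsum hsum 0 fun q _ => hfnn q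
  set m : ℝ := (volume (A ∩ Qcell d)).toReal with hmdef
  have hmpos : 0 < m :=
    ENNReal.toReal_pos hm.ne' (volume_inter_lt_top A).ne
  have hf0 : f 0 = (2 * m - 1 - ub) ^ 2 / κ ^ 2 := by
    rw [hf]
    simp only [fCoeff_zero ub A hA]
    rw [Complex.norm_real, Real.norm_eq_abs, _root_.sq_abs]
    have h0 : (∑ i : Fin d, (((0 : Fin d → ℤ) i : ℝ)) ^ 2) = 0 := by simp
    rw [h0]
    norm_num
    rfl
  have hkey : (1 + ub) ^ 2 < (2 * m - 1 - ub) ^ 2 := by nlinarith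
  have h1 : (1 + ub) ^ 2 / (2 * κ ^ 2) < (2 * m - 1 - ub) ^ 2 / (2 * κ ^ 2) := by
    apply div_lt_div_of_pos_right hkey
    positivity
  calc (1 + ub) ^ 2 / (2 * κ ^ 2) < (2 * m - 1 - ub) ^ 2 / (2 * κ ^ 2) := h1
    _ = (1/2) * f 0 := by rw [hf0]; ring
    _ ≤ (1/2) * ∑' q, f q := by linarith
    _ = nonlocalSharp d κ ub A := rfl

end Final

/-- for `ū < −1`, the empty set has energy `(1+ū)²/(2κ²)` and every
`ℤ²`-periodic measurable set of positive measure has strictly larger energy, i.e.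
`u ≡ −1` is the unique global minimizer of the sharp interface energy. -/
theorem statement_2 (κ ε ub : ℝ) (hκ : 0 < κ) (hε : 0 < ε) (hub : ub < -1) :
    sharpEnergy 2 κ ε ub ∅ = ENNReal.ofReal ((1 + ub) ^ 2 / (2 * κ ^ 2)) ∧
    ∀ A : Set (EuclideanSpace ℝ (Fin 2)), MeasurableSet A → IsPeriodicSet 2 A →
      0 < volume (A ∩ Qcell 2) →
      ENNReal.ofReal ((1 + ub) ^ 2 / (2 * κ ^ 2)) < sharpEnergy 2 κ ε ub A := by
  constructor
  · rw [sharpEnergy, frontier_empty, Set.empty_inter, measure_empty, mul_zero, zero_add,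
      nonlocal_empty κ ub hκ]
  · intro A hA _ hm
    have h1 : (1 + ub) ^ 2 / (2 * κ ^ 2) < nonlocalSharp 2 κ ub A :=
      nonlocal_gt κ ub hκ hub A hA hm
    have h2 : ENNReal.ofReal ((1 + ub) ^ 2 / (2 * κ ^ 2))
        < ENNReal.ofReal (nonlocalSharp 2 κ ub A) := by
      apply (ENNReal.ofReal_lt_ofReal_iff ?_).mpr h1
      have : (0:ℝ) ≤ (1 + ub) ^ 2 / (2 * κ ^ 2) := by positivity
      linarith
    exact lt_of_lt_of_le h2 (by rw [sharpEnergy]; exact le_add_self)
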